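/- arXiv:1511.08208 — 3 statements merged into one kernel-verified Lean document; each statement's English description precedes it below -/
import Mathlib

section
/- Let X2 be defined by the vanishing of χ = s1 x1^4 + s2 x1^3 x2 + s3 x1^2 x2^2 + s4 x1 x2^3 + s5 x1^2 x3 + s6 x1 x2 x3 + s7 x2^2 x3 + s8 x3^2 in the toric variety Bl_1 P^(1,1,2) with homogeneous coordinates x1, x2, x3, x4, x5 (specialized to the chart x4 = x5 = 1 in weighted projective space P^(1,1,2) with coordinates x1, x2, x3 of weights 1,1,2), where the Stanley-Reisner ideal forbids simultaneous vanishing of {x1, x3}, {x2, x3} and {x2, x5} etc. Then the two loci {x1 = 0} ∩ X2 and {x4 = 0} ∩ X2 (with x4 reinstated) define the same point if and only if s7 = 0, and in that case the common point is [x1:x2:x3:x4:x5] = [0:1:1:0:1]. -/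
/-- Lemma D.1 of the paper.  Let `X₂ = {χ = 0}` in `Bl₁ℙ^(1,1,2)` with
homogeneous coordinates `x₁, …, x₅`, where the Stanley–Reisner ideal forbids the simultaneous
vanishing of `x₂, x₃, x₅` along the relevant loci, and with generic coefficients (`s₄ ≠ 0`,
`s₈ ≠ 0`).  The two sections `{x₁ = 0} ∩ X₂` and `{x₄ = 0} ∩ X₂` merge into a single point —
i.e. every point of `X₂` with `x₁ = 0` also has `x₄ = 0` and vice versa — if and only if
`s₇ = 0`, and in that case the common point is `[x₁:x₂:x₃:x₄:x₅] = [0:1:1:0:1]`, which indeed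
lies on `X₂`. -/
theorem stmt_10 {K : Type*} [Field K] (s1 s2 s3 s4 s5 s6 s7 s8 : K)
    (hs4 : s4 ≠ 0) (hs8 : s8 ≠ 0) :
    let χ : K → K → K → K → K → K := fun x1 x2 x3 x4 x5 =>
      s1 * x1 ^ 4 * x4 ^ 3 * x5 ^ 2 + s2 * x1 ^ 3 * x2 * x4 ^ 2 * x5 ^ 2
        + s3 * x1 ^ 2 * x2 ^ 2 * x4 * x5 + s4 * x1 * x2 ^ 3 * x5 ^ 2
        + s5 * x1 ^ 2 * x3 * x4 ^ 2 * x5 + s6 * x1 * x2 * x3 * x4 * x5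
        + s7 * x2 ^ 2 * x3 * x5 + s8 * x3 ^ 2 * x4
    (((∀ x2' x3' x4' x5' : K, x2' ≠ 0 → x3' ≠ 0 → x5' ≠ 0 →
          χ 0 x2' x3' x4' x5' = 0 → x4' = 0) ∧
      (∀ x1' x2' x3' x5' : K, x2' ≠ 0 → x3' ≠ 0 → x5' ≠ 0 →
          χ x1' x2' x3' 0 x5' = 0 → x1' = 0)) ↔ s7 = 0) ∧
    (s7 = 0 → χ 0 1 1 0 1 = 0) := by
  intro χ
  constructor
  · constructor
    · rintro ⟨h1, _⟩
      by_contra hs7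
      have := h1 1 1 (-s7 / s8) 1 one_ne_zero one_ne_zero one_ne_zero
        (by simp only [χ]; field_simp; ring)
      exact hs7 (by field_simp at this; simpa using this)
    · intro hs7
      refine ⟨fun x2' x3' x4' x5' h2 h3 h5 heq => ?_, fun x1' x2' x3' x5' h2 h3 h5 heq => ?_⟩
      · simp only [χ, hs7] at heq
        ring_nf at heq
        -- heq : something = 0 with only s8 term
        have : s8 * x3' ^ 2 * x4' = 0 := by linear_combination heq
        rcases mul_eq_zero.1 this with h | h
        · rcases mul_eq_zero.1 h with h | h
          · exact absurd h hs8
          · exact absurd (pow_eq_zero_iff (by norm_num) |>.1 h) h3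
        · exact h
      · simp only [χ, hs7] at heq
        have : s4 * x1' * x2' ^ 3 * x5' ^ 2 = 0 := by linear_combination heq
        rcases mul_eq_zero.1 this with h | h
        · rcases mul_eq_zero.1 h with h | h
          · rcases mul_eq_zero.1 h with h | h
            · exact absurd h hs4
            · exact h
          · exact absurd (pow_eq_zero_iff (by norm_num) |>.1 h) h2
        · exact absurd (pow_eq_zero_iff (by norm_num) |>.1 h) h5
  · intro hs7
    simp [χ, hs7]
end

section
/- Let f and g be the polynomials in Q[s21, s22, s32, s42, s52, s62, s72, s82] given by f = -(1/48) s62^4 + (1/6) s52 s62^2 s72 - (1/3) s52^2 s72^2 - (1/2) s42 s52 s62 s82 + (1/6) s32 s62^2 s82 + (1/3) s32 s52 s72 s82 - (1/2) s22 s62 s72 s82 + s21 s72^2 s82 - (1/3) s32^2 s82^2 + s22 s42 s82^2, and g the corresponding degree-6 expression from the paper (the Weierstrass coefficient g of the quartic model, equation (g2g3)). Then the discriminant Δ = 4 f^3 + 27 g^2 is divisible by s82^2 in the polynomial ring Q[s21, s22, s32, s42, s52, s62, s72, s82]. -/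
open MvPolynomial


theorem dvd_key {R : Type*} [CommRing R] (A B C2 a b c s : R)
    (h1 : 4 * A ^ 3 + 27 * a ^ 2 = 0) (h2 : 12 * A ^ 2 * B + 54 * a * b = 0) :
    s ^ 2 ∣ 4 * (A + B * s + C2 * s ^ 2) ^ 3 + 27 * (a + b * s + c * s ^ 2) ^ 2 :=
  ⟨4 * (3 * A ^ 2 * C2 + 3 * A * B ^ 2 + (6 * A * B * C2 + B ^ 3) * s
      + (3 * A * C2 ^ 2 + 3 * B ^ 2 * C2) * s ^ 2 + 3 * B * C2 ^ 2 * s ^ 3 + C2 ^ 3 * s ^ 4)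
    + 27 * (2 * a * c + b ^ 2 + 2 * b * c * s + c ^ 2 * s ^ 2),
   by linear_combination h1 + s * h2⟩

set_option maxHeartbeats 1000000 in

/-- For the Weierstrass coefficients `f` and `g` of the quartic model (paper,
eq. (g2g3)), regarded as polynomials in `ℚ[s21, s22, s32, s42, s52, s62, s72, s82]` (with
`s21 = X 0`, `s22 = X 1`, `s32 = X 2`, `s42 = X 3`, `s52 = X 4`, `s62 = X 5`, `s72 = X 6`,
`s82 = X 7`), the discriminant `Δ = 4f³ + 27g²` is divisible by `s82²`, encoding the generic
`I₂` (SU(2)) Kodaira fiber at `s82 = 0`. -/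
theorem stmt_12 :
    let s21 : MvPolynomial (Fin 8) ℚ := X 0
    let s22 : MvPolynomial (Fin 8) ℚ := X 1
    let s32 : MvPolynomial (Fin 8) ℚ := X 2
    let s42 : MvPolynomial (Fin 8) ℚ := X 3
    let s52 : MvPolynomial (Fin 8) ℚ := X 4
    let s62 : MvPolynomial (Fin 8) ℚ := X 5
    let s72 : MvPolynomial (Fin 8) ℚ := X 6
    let s82 : MvPolynomial (Fin 8) ℚ := X 7
    let f : MvPolynomial (Fin 8) ℚ :=
      -(C (1/48 : ℚ)) * s62 ^ 4 + C (1/6 : ℚ) * s52 * s62 ^ 2 * s72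
        - C (1/3 : ℚ) * s52 ^ 2 * s72 ^ 2 - C (1/2 : ℚ) * s42 * s52 * s62 * s82
        + C (1/6 : ℚ) * s32 * s62 ^ 2 * s82 + C (1/3 : ℚ) * s32 * s52 * s72 * s82
        - C (1/2 : ℚ) * s22 * s62 * s72 * s82 + s21 * s72 ^ 2 * s82
        - C (1/3 : ℚ) * s32 ^ 2 * s82 ^ 2 + s22 * s42 * s82 ^ 2
    let g : MvPolynomial (Fin 8) ℚ :=
      C (1/864 : ℚ) * s62 ^ 6 - C (1/72 : ℚ) * s52 * s62 ^ 4 * s72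
        + C (1/18 : ℚ) * s52 ^ 2 * s62 ^ 2 * s72 ^ 2 - C (2/27 : ℚ) * s52 ^ 3 * s72 ^ 3
        + C (1/24 : ℚ) * s42 * s52 * s62 ^ 3 * s82 - C (1/72 : ℚ) * s32 * s62 ^ 4 * s82
        - C (1/6 : ℚ) * s42 * s52 ^ 2 * s62 * s72 * s82
        + C (1/36 : ℚ) * s32 * s52 * s62 ^ 2 * s72 * s82
        + C (1/24 : ℚ) * s22 * s62 ^ 3 * s72 * s82
        + C (1/9 : ℚ) * s32 * s52 ^ 2 * s72 ^ 2 * s82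
        - C (1/6 : ℚ) * s22 * s52 * s62 * s72 ^ 2 * s82
        - C (1/12 : ℚ) * s21 * s62 ^ 2 * s72 ^ 2 * s82
        + C (1/3 : ℚ) * s21 * s52 * s72 ^ 3 * s82
        + C (1/4 : ℚ) * s42 ^ 2 * s52 ^ 2 * s82 ^ 2
        - C (1/6 : ℚ) * s32 * s42 * s52 * s62 * s82 ^ 2
        + C (1/18 : ℚ) * s32 ^ 2 * s62 ^ 2 * s82 ^ 2
        - C (1/12 : ℚ) * s22 * s42 * s62 ^ 2 * s82 ^ 2
        + C (1/9 : ℚ) * s32 ^ 2 * s52 * s72 * s82 ^ 2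
        - C (1/6 : ℚ) * s22 * s42 * s52 * s72 * s82 ^ 2
        - C (1/6 : ℚ) * s22 * s32 * s62 * s72 * s82 ^ 2
        + s21 * s42 * s62 * s72 * s82 ^ 2
        + C (1/4 : ℚ) * s22 ^ 2 * s72 ^ 2 * s82 ^ 2
        - C (2/3 : ℚ) * s21 * s32 * s72 ^ 2 * s82 ^ 2
        - C (2/27 : ℚ) * s32 ^ 3 * s82 ^ 3
        + C (1/3 : ℚ) * s22 * s32 * s42 * s82 ^ 3
        - s21 * s42 ^ 2 * s82 ^ 3
    s82 ^ 2 ∣ 4 * f ^ 3 + 27 * g ^ 2 := by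
  intro s21 s22 s32 s42 s52 s62 s72 s82 f g
  have hf : f = -(C (1/48 : ℚ)) * (s62 ^ 2 - 4 * (s52 * s72)) ^ 2 + (-(C (1/2 : ℚ)) * (s42 * s52 * s62) + C (1/6 : ℚ) * (s32 * s62 ^ 2) + C (1/3 : ℚ) * (s32 * s52 * s72) - C (1/2 : ℚ) * (s22 * s62 * s72) + s21 * s72 ^ 2) * s82 + (-(C (1/3 : ℚ)) * s32 ^ 2 + s22 * s42) * s82 ^ 2 := by
    apply MvPolynomial.funext; intro x
    simp only [f, s21, s22, s32, s42, s52, s62, s72, s82, map_add, map_sub, map_mul, map_pow,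
      map_neg, map_ofNat, eval_C, eval_X]
    ring
  have hg : g = C (1/864 : ℚ) * (s62 ^ 2 - 4 * (s52 * s72)) ^ 3 + (-(C (1/12 : ℚ)) * ((s62 ^ 2 - 4 * (s52 * s72)) * (-(C (1/2 : ℚ)) * (s42 * s52 * s62) + C (1/6 : ℚ) * (s32 * s62 ^ 2) + C (1/3 : ℚ) * (s32 * s52 * s72) - C (1/2 : ℚ) * (s22 * s62 * s72) + s21 * s72 ^ 2))) * s82
      + (C (1/4 : ℚ) * (s42 ^ 2 * s52 ^ 2) - C (1/6 : ℚ) * (s32 * s42 * s52 * s62)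
      + C (1/18 : ℚ) * (s32 ^ 2 * s62 ^ 2) - C (1/12 : ℚ) * (s22 * s42 * s62 ^ 2)
      + C (1/9 : ℚ) * (s32 ^ 2 * s52 * s72) - C (1/6 : ℚ) * (s22 * s42 * s52 * s72)
      - C (1/6 : ℚ) * (s22 * s32 * s62 * s72) + s21 * s42 * s62 * s72
      + C (1/4 : ℚ) * (s22 ^ 2 * s72 ^ 2) - C (2/3 : ℚ) * (s21 * s32 * s72 ^ 2)
      + (-(C (2/27 : ℚ)) * s32 ^ 3 + C (1/3 : ℚ) * (s22 * s32 * s42) - s21 * s42 ^ 2) * s82) * s82 ^ 2 := by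
    apply MvPolynomial.funext; intro x
    simp only [g, s21, s22, s32, s42, s52, s62, s72, s82, map_add, map_sub, map_mul, map_pow,
      map_neg, map_ofNat, eval_C, eval_X]
    ring
  rw [hf, hg]
  refine dvd_key _ _ _ _ _ _ _ ?_ ?_
  · apply MvPolynomial.funext; intro x
    simp only [map_add, map_sub, map_mul, map_pow, map_neg, map_ofNat, map_zero, eval_C, eval_X]
    ring
  · apply MvPolynomial.funext; intro x
    simp only [map_add, map_sub, map_mul, map_pow, map_neg, map_ofNat, map_zero, eval_C, eval_X]
    ring
end

section
/- Let s13, s31, s72, s82 and U be indeterminates. Then the difference of the two degree-six Weierstrass coefficients g_χ^+ and g_χ'^+ arising from the two paths in the stable-degeneration diagram satisfies g_χ^+ - g_χ'^+ = (2/3) U^6 s13 s31 s72^2 s82^2; in particular, whenever s13 s31 s72 s82 ≠ 0, the operations of passing to Weierstrass form and taking the stable degeneration limit do not commute, while the coefficients f satisfy f_χ^+ = f_χ'^+. -/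
open MvPolynomial

/-- The short-Weierstrass coefficient `f` of the quartic hypersurface
`s₁x₁⁴ + s₂x₁³x₂ + s₃x₁²x₂² + s₄x₁x₂³ + s₅x₁²x₃ + s₆x₁x₂x₃ + s₇x₂²x₃ + s₈x₃² = 0` in
`ℙ^(1,1,2)`, as a function of the coefficients `s = (s₁, …, s₈)`, obtained via the Tate form
of Appendix A of the paper and the standard formulas `f = -(b₂² - 24b₄)/48`. -/
noncomputable def quarticWeierstrassF {A : Type*} [CommRing A] [Algebra ℚ A]
    (s : Fin 8 → A) : A :=
  let a1 := s 5
  let a2 := -(s 4 * s 6) - s 2 * s 7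
  let a3 := -(s 3 * s 4 * s 7) - s 1 * s 6 * s 7
  let a4 := s 2 * s 4 * s 6 * s 7 + s 0 * s 6 ^ 2 * s 7 + s 1 * s 3 * s 7 ^ 2
  let b2 := a1 ^ 2 + 4 * a2
  let b4 := a1 * a3 + 2 * a4
  (-(1 : ℚ) / 48) • (b2 ^ 2 - 24 * b4)

/-- The short-Weierstrass coefficient `g` of the quartic hypersurface in `ℙ^(1,1,2)`, as a
function of the coefficients `s = (s₁, …, s₈)`, via `g = (b₂³ - 36b₂b₄ + 216b₆)/864`. -/
noncomputable def quarticWeierstrassG {A : Type*} [CommRing A] [Algebra ℚ A]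
    (s : Fin 8 → A) : A :=
  let a1 := s 5
  let a2 := -(s 4 * s 6) - s 2 * s 7
  let a3 := -(s 3 * s 4 * s 7) - s 1 * s 6 * s 7
  let a4 := s 2 * s 4 * s 6 * s 7 + s 0 * s 6 ^ 2 * s 7 + s 1 * s 3 * s 7 ^ 2
  let a6 := -(s 0 * s 2 * s 6 ^ 2 * s 7 ^ 2) - s 0 * s 3 ^ 2 * s 7 ^ 3
    + s 3 * s 6 * (-(s 1 * s 4 * s 7 ^ 2) + s 0 * s 5 * s 7 ^ 2)
  let b2 := a1 ^ 2 + 4 * a2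
  let b4 := a1 * a3 + 2 * a4
  let b6 := a3 ^ 2 + 4 * a6
  ((1 : ℚ) / 864) • (b2 ^ 3 - 36 * b2 * b4 + 216 * b6)


private lemma qsmul_cancel {A : Type*} [AddCommMonoid A] [Module ℚ A] {q : ℚ} (hq : q ≠ 0)
    {x y : A} (h : q • x = q • y) : x = y := by
  have h2 := congrArg (fun z => q⁻¹ • z) h
  simpa [smul_smul, inv_mul_cancel₀ hq] using h2

private lemma mul864 (x : MvPolynomial (Fin 15) ℚ) : 864 * (((1 : ℚ) / 864) • x) = x := by
  rw [MvPolynomial.smul_eq_C_mul, show (864 : MvPolynomial (Fin 15) ℚ) = C (864:ℚ) from (map_ofNat C 864).symm, ← mul_assoc,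
    ← map_mul]
  norm_num

private lemma mul48 (x : MvPolynomial (Fin 15) ℚ) : 48 * ((-(1 : ℚ) / 48) • x) = -x := by
  rw [MvPolynomial.smul_eq_C_mul, show (48 : MvPolynomial (Fin 15) ℚ) = C (48:ℚ) from (map_ofNat C 48).symm, ← mul_assoc,
    ← map_mul]
  rw [show ((48:ℚ) * (-(1:ℚ)/48)) = -1 from by norm_num, map_neg, map_one, neg_one_mul]

private noncomputable def ev (a : MvPolynomial (Fin 15) ℚ) : MvPolynomial (Fin 15) ℚ →ₐ[ℚ] MvPolynomial (Fin 15) ℚ :=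
  aeval (Function.update X (13 : Fin 15) a)

private lemma ev_X13 (a : MvPolynomial (Fin 15) ℚ) : ev a (X 13) = a := by simp [ev]

private lemma ev_Xne (a : MvPolynomial (Fin 15) ℚ) (i : Fin 15) (h : i ≠ 13) : ev a (X i) = X i := by
  simp [ev, Function.update_of_ne h]

private lemma ev_X0 (a : MvPolynomial (Fin 15) ℚ) : ev a (X 0) = X 0 := ev_Xne a 0 (by decide)
private lemma ev_X1 (a : MvPolynomial (Fin 15) ℚ) : ev a (X 1) = X 1 := ev_Xne a 1 (by decide)
private lemma ev_X2 (a : MvPolynomial (Fin 15) ℚ) : ev a (X 2) = X 2 := ev_Xne a 2 (by decide)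
private lemma ev_X3 (a : MvPolynomial (Fin 15) ℚ) : ev a (X 3) = X 3 := ev_Xne a 3 (by decide)
private lemma ev_X4 (a : MvPolynomial (Fin 15) ℚ) : ev a (X 4) = X 4 := ev_Xne a 4 (by decide)
private lemma ev_X5 (a : MvPolynomial (Fin 15) ℚ) : ev a (X 5) = X 5 := ev_Xne a 5 (by decide)
private lemma ev_X6 (a : MvPolynomial (Fin 15) ℚ) : ev a (X 6) = X 6 := ev_Xne a 6 (by decide)
private lemma ev_X7 (a : MvPolynomial (Fin 15) ℚ) : ev a (X 7) = X 7 := ev_Xne a 7 (by decide)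
private lemma ev_X8 (a : MvPolynomial (Fin 15) ℚ) : ev a (X 8) = X 8 := ev_Xne a 8 (by decide)
private lemma ev_X9 (a : MvPolynomial (Fin 15) ℚ) : ev a (X 9) = X 9 := ev_Xne a 9 (by decide)
private lemma ev_X10 (a : MvPolynomial (Fin 15) ℚ) : ev a (X 10) = X 10 := ev_Xne a 10 (by decide)
private lemma ev_X11 (a : MvPolynomial (Fin 15) ℚ) : ev a (X 11) = X 11 := ev_Xne a 11 (by decide)
private lemma ev_X12 (a : MvPolynomial (Fin 15) ℚ) : ev a (X 12) = X 12 := ev_Xne a 12 (by decide)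
private lemma ev_X14 (a : MvPolynomial (Fin 15) ℚ) : ev a (X 14) = X 14 := ev_Xne a 14 (by decide)

private lemma ev_rename (a : MvPolynomial (Fin 15) ℚ) (p : MvPolynomial (Fin 12) ℚ) (h : (12:ℕ) ≤ 15) :
    ev a (rename (Fin.castLE h) p) = rename (Fin.castLE h) p := by
  have key : (ev a).comp (rename (R := ℚ) (Fin.castLE h)) = rename (Fin.castLE h) := by
    apply MvPolynomial.algHom_ext
    intro i
    have hi : Fin.castLE h i ≠ 13 := by
      intro e
      have := congrArg Fin.val e
      simp [Fin.coe_castLE] at this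
      omega
    simp [ev_Xne a _ hi]
  exact AlgHom.congr_fun key p

private lemma vec8_0 {α : Type*} (a0 a1 a2 a3 a4 a5 a6 a7 : α) : ![a0, a1, a2, a3, a4, a5, a6, a7] (0 : Fin 8) = a0 := rfl
private lemma vec8_1 {α : Type*} (a0 a1 a2 a3 a4 a5 a6 a7 : α) : ![a0, a1, a2, a3, a4, a5, a6, a7] (1 : Fin 8) = a1 := rfl
private lemma vec8_2 {α : Type*} (a0 a1 a2 a3 a4 a5 a6 a7 : α) : ![a0, a1, a2, a3, a4, a5, a6, a7] (2 : Fin 8) = a2 := rfl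
private lemma vec8_3 {α : Type*} (a0 a1 a2 a3 a4 a5 a6 a7 : α) : ![a0, a1, a2, a3, a4, a5, a6, a7] (3 : Fin 8) = a3 := rfl
private lemma vec8_4 {α : Type*} (a0 a1 a2 a3 a4 a5 a6 a7 : α) : ![a0, a1, a2, a3, a4, a5, a6, a7] (4 : Fin 8) = a4 := rfl
private lemma vec8_5 {α : Type*} (a0 a1 a2 a3 a4 a5 a6 a7 : α) : ![a0, a1, a2, a3, a4, a5, a6, a7] (5 : Fin 8) = a5 := rfl
private lemma vec8_6 {α : Type*} (a0 a1 a2 a3 a4 a5 a6 a7 : α) : ![a0, a1, a2, a3, a4, a5, a6, a7] (6 : Fin 8) = a6 := rfl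
private lemma vec8_7 {α : Type*} (a0 a1 a2 a3 a4 a5 a6 a7 : α) : ![a0, a1, a2, a3, a4, a5, a6, a7] (7 : Fin 8) = a7 := rfl

private lemma Gmul (s : Fin 8 → MvPolynomial (Fin 15) ℚ) : 864 * quarticWeierstrassG s =
    (s 5 ^ 2 + 4 * (-(s 4 * s 6) - s 2 * s 7)) ^ 3 - 36 * (s 5 ^ 2 + 4 * (-(s 4 * s 6) - s 2 * s 7)) * (s 5 * (-(s 3 * s 4 * s 7) - s 1 * s 6 * s 7) + 2 * (s 2 * s 4 * s 6 * s 7 + s 0 * s 6 ^ 2 * s 7 + s 1 * s 3 * s 7 ^ 2)) + 216 * ((-(s 3 * s 4 * s 7) - s 1 * s 6 * s 7) ^ 2 + 4 * (-(s 0 * s 2 * s 6 ^ 2 * s 7 ^ 2) - s 0 * s 3 ^ 2 * s 7 ^ 3 + s 3 * s 6 * (-(s 1 * s 4 * s 7 ^ 2) + s 0 * s 5 * s 7 ^ 2))) := by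
  simp only [quarticWeierstrassG]
  rw [mul864]

private lemma Fmul (s : Fin 8 → MvPolynomial (Fin 15) ℚ) : 48 * quarticWeierstrassF s =
    -((s 5 ^ 2 + 4 * (-(s 4 * s 6) - s 2 * s 7)) ^ 2 - 24 * (s 5 * (-(s 3 * s 4 * s 7) - s 1 * s 6 * s 7) + 2 * (s 2 * s 4 * s 6 * s 7 + s 0 * s 6 ^ 2 * s 7 + s 1 * s 3 * s 7 ^ 2))) := by
  simp only [quarticWeierstrassF]
  rw [mul48]

section SumExpand
variable {M : Type*} [AddCommMonoid M]
private lemma sum13 (f : Fin 13 → M) : ∑ k, f k = f 0 + f 1 + f 2 + f 3 + f 4 + f 5 + f 6 + f 7 + f 8 + f 9 + f 10 + f 11 + f 12 := by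
  simp [Fin.sum_univ_succ,
    show (Fin.succ (2:Fin 3) : Fin 4) = 3 from rfl,
    show (Fin.succ (2:Fin 4) : Fin 5) = 3 from rfl,
    show (Fin.succ (3:Fin 4) : Fin 5) = 4 from rfl,
    show (Fin.succ (2:Fin 5) : Fin 6) = 3 from rfl,
    show (Fin.succ (3:Fin 5) : Fin 6) = 4 from rfl,
    show (Fin.succ (4:Fin 5) : Fin 6) = 5 from rfl,
    show (Fin.succ (2:Fin 6) : Fin 7) = 3 from rfl,
    show (Fin.succ (3:Fin 6) : Fin 7) = 4 from rfl,
    show (Fin.succ (4:Fin 6) : Fin 7) = 5 from rfl,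
    show (Fin.succ (5:Fin 6) : Fin 7) = 6 from rfl,
    show (Fin.succ (2:Fin 7) : Fin 8) = 3 from rfl,
    show (Fin.succ (3:Fin 7) : Fin 8) = 4 from rfl,
    show (Fin.succ (4:Fin 7) : Fin 8) = 5 from rfl,
    show (Fin.succ (5:Fin 7) : Fin 8) = 6 from rfl,
    show (Fin.succ (6:Fin 7) : Fin 8) = 7 from rfl,
    show (Fin.succ (2:Fin 8) : Fin 9) = 3 from rfl,
    show (Fin.succ (3:Fin 8) : Fin 9) = 4 from rfl,
    show (Fin.succ (4:Fin 8) : Fin 9) = 5 from rfl,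
    show (Fin.succ (5:Fin 8) : Fin 9) = 6 from rfl,
    show (Fin.succ (6:Fin 8) : Fin 9) = 7 from rfl,
    show (Fin.succ (7:Fin 8) : Fin 9) = 8 from rfl,
    show (Fin.succ (2:Fin 9) : Fin 10) = 3 from rfl,
    show (Fin.succ (3:Fin 9) : Fin 10) = 4 from rfl,
    show (Fin.succ (4:Fin 9) : Fin 10) = 5 from rfl,
    show (Fin.succ (5:Fin 9) : Fin 10) = 6 from rfl,
    show (Fin.succ (6:Fin 9) : Fin 10) = 7 from rfl,
    show (Fin.succ (7:Fin 9) : Fin 10) = 8 from rfl,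
    show (Fin.succ (8:Fin 9) : Fin 10) = 9 from rfl,
    show (Fin.succ (2:Fin 10) : Fin 11) = 3 from rfl,
    show (Fin.succ (3:Fin 10) : Fin 11) = 4 from rfl,
    show (Fin.succ (4:Fin 10) : Fin 11) = 5 from rfl,
    show (Fin.succ (5:Fin 10) : Fin 11) = 6 from rfl,
    show (Fin.succ (6:Fin 10) : Fin 11) = 7 from rfl,
    show (Fin.succ (7:Fin 10) : Fin 11) = 8 from rfl,
    show (Fin.succ (8:Fin 10) : Fin 11) = 9 from rfl,
    show (Fin.succ (9:Fin 10) : Fin 11) = 10 from rfl,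
    show (Fin.succ (2:Fin 11) : Fin 12) = 3 from rfl,
    show (Fin.succ (3:Fin 11) : Fin 12) = 4 from rfl,
    show (Fin.succ (4:Fin 11) : Fin 12) = 5 from rfl,
    show (Fin.succ (5:Fin 11) : Fin 12) = 6 from rfl,
    show (Fin.succ (6:Fin 11) : Fin 12) = 7 from rfl,
    show (Fin.succ (7:Fin 11) : Fin 12) = 8 from rfl,
    show (Fin.succ (8:Fin 11) : Fin 12) = 9 from rfl,
    show (Fin.succ (9:Fin 11) : Fin 12) = 10 from rfl,
    show (Fin.succ (10:Fin 11) : Fin 12) = 11 from rfl,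
    show (Fin.succ (2:Fin 12) : Fin 13) = 3 from rfl,
    show (Fin.succ (3:Fin 12) : Fin 13) = 4 from rfl,
    show (Fin.succ (4:Fin 12) : Fin 13) = 5 from rfl,
    show (Fin.succ (5:Fin 12) : Fin 13) = 6 from rfl,
    show (Fin.succ (6:Fin 12) : Fin 13) = 7 from rfl,
    show (Fin.succ (7:Fin 12) : Fin 13) = 8 from rfl,
    show (Fin.succ (8:Fin 12) : Fin 13) = 9 from rfl,
    show (Fin.succ (9:Fin 12) : Fin 13) = 10 from rfl,
    show (Fin.succ (10:Fin 12) : Fin 13) = 11 from rfl,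
    show (Fin.succ (11:Fin 12) : Fin 13) = 12 from rfl]
  abel
private lemma sum9 (f : Fin 9 → M) : ∑ k, f k = f 0 + f 1 + f 2 + f 3 + f 4 + f 5 + f 6 + f 7 + f 8 := by
  simp [Fin.sum_univ_succ,
    show (Fin.succ (2:Fin 3) : Fin 4) = 3 from rfl,
    show (Fin.succ (2:Fin 4) : Fin 5) = 3 from rfl,
    show (Fin.succ (3:Fin 4) : Fin 5) = 4 from rfl,
    show (Fin.succ (2:Fin 5) : Fin 6) = 3 from rfl,
    show (Fin.succ (3:Fin 5) : Fin 6) = 4 from rfl,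
    show (Fin.succ (4:Fin 5) : Fin 6) = 5 from rfl,
    show (Fin.succ (2:Fin 6) : Fin 7) = 3 from rfl,
    show (Fin.succ (3:Fin 6) : Fin 7) = 4 from rfl,
    show (Fin.succ (4:Fin 6) : Fin 7) = 5 from rfl,
    show (Fin.succ (5:Fin 6) : Fin 7) = 6 from rfl,
    show (Fin.succ (2:Fin 7) : Fin 8) = 3 from rfl,
    show (Fin.succ (3:Fin 7) : Fin 8) = 4 from rfl,
    show (Fin.succ (4:Fin 7) : Fin 8) = 5 from rfl,
    show (Fin.succ (5:Fin 7) : Fin 8) = 6 from rfl,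
    show (Fin.succ (6:Fin 7) : Fin 8) = 7 from rfl,
    show (Fin.succ (2:Fin 8) : Fin 9) = 3 from rfl,
    show (Fin.succ (3:Fin 8) : Fin 9) = 4 from rfl,
    show (Fin.succ (4:Fin 8) : Fin 9) = 5 from rfl,
    show (Fin.succ (5:Fin 8) : Fin 9) = 6 from rfl,
    show (Fin.succ (6:Fin 8) : Fin 9) = 7 from rfl,
    show (Fin.succ (7:Fin 8) : Fin 9) = 8 from rfl,
    show (Fin.succ (2:Fin 9) : Fin 10) = 3 from rfl,
    show (Fin.succ (3:Fin 9) : Fin 10) = 4 from rfl,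
    show (Fin.succ (4:Fin 9) : Fin 10) = 5 from rfl,
    show (Fin.succ (5:Fin 9) : Fin 10) = 6 from rfl,
    show (Fin.succ (6:Fin 9) : Fin 10) = 7 from rfl,
    show (Fin.succ (7:Fin 9) : Fin 10) = 8 from rfl,
    show (Fin.succ (8:Fin 9) : Fin 10) = 9 from rfl,
    show (Fin.succ (2:Fin 10) : Fin 11) = 3 from rfl,
    show (Fin.succ (3:Fin 10) : Fin 11) = 4 from rfl,
    show (Fin.succ (4:Fin 10) : Fin 11) = 5 from rfl,
    show (Fin.succ (5:Fin 10) : Fin 11) = 6 from rfl,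
    show (Fin.succ (6:Fin 10) : Fin 11) = 7 from rfl,
    show (Fin.succ (7:Fin 10) : Fin 11) = 8 from rfl,
    show (Fin.succ (8:Fin 10) : Fin 11) = 9 from rfl,
    show (Fin.succ (9:Fin 10) : Fin 11) = 10 from rfl,
    show (Fin.succ (2:Fin 11) : Fin 12) = 3 from rfl,
    show (Fin.succ (3:Fin 11) : Fin 12) = 4 from rfl,
    show (Fin.succ (4:Fin 11) : Fin 12) = 5 from rfl,
    show (Fin.succ (5:Fin 11) : Fin 12) = 6 from rfl,
    show (Fin.succ (6:Fin 11) : Fin 12) = 7 from rfl,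
    show (Fin.succ (7:Fin 11) : Fin 12) = 8 from rfl,
    show (Fin.succ (8:Fin 11) : Fin 12) = 9 from rfl,
    show (Fin.succ (9:Fin 11) : Fin 12) = 10 from rfl,
    show (Fin.succ (10:Fin 11) : Fin 12) = 11 from rfl,
    show (Fin.succ (2:Fin 12) : Fin 13) = 3 from rfl,
    show (Fin.succ (3:Fin 12) : Fin 13) = 4 from rfl,
    show (Fin.succ (4:Fin 12) : Fin 13) = 5 from rfl,
    show (Fin.succ (5:Fin 12) : Fin 13) = 6 from rfl,
    show (Fin.succ (6:Fin 12) : Fin 13) = 7 from rfl,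
    show (Fin.succ (7:Fin 12) : Fin 13) = 8 from rfl,
    show (Fin.succ (8:Fin 12) : Fin 13) = 9 from rfl,
    show (Fin.succ (9:Fin 12) : Fin 13) = 10 from rfl,
    show (Fin.succ (10:Fin 12) : Fin 13) = 11 from rfl,
    show (Fin.succ (11:Fin 12) : Fin 13) = 12 from rfl]
  abel
private lemma sum7 (f : Fin 7 → M) : ∑ k, f k = f 0 + f 1 + f 2 + f 3 + f 4 + f 5 + f 6 := by
  simp [Fin.sum_univ_succ,
    show (Fin.succ (2:Fin 3) : Fin 4) = 3 from rfl,
    show (Fin.succ (2:Fin 4) : Fin 5) = 3 from rfl,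
    show (Fin.succ (3:Fin 4) : Fin 5) = 4 from rfl,
    show (Fin.succ (2:Fin 5) : Fin 6) = 3 from rfl,
    show (Fin.succ (3:Fin 5) : Fin 6) = 4 from rfl,
    show (Fin.succ (4:Fin 5) : Fin 6) = 5 from rfl,
    show (Fin.succ (2:Fin 6) : Fin 7) = 3 from rfl,
    show (Fin.succ (3:Fin 6) : Fin 7) = 4 from rfl,
    show (Fin.succ (4:Fin 6) : Fin 7) = 5 from rfl,
    show (Fin.succ (5:Fin 6) : Fin 7) = 6 from rfl,
    show (Fin.succ (2:Fin 7) : Fin 8) = 3 from rfl,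
    show (Fin.succ (3:Fin 7) : Fin 8) = 4 from rfl,
    show (Fin.succ (4:Fin 7) : Fin 8) = 5 from rfl,
    show (Fin.succ (5:Fin 7) : Fin 8) = 6 from rfl,
    show (Fin.succ (6:Fin 7) : Fin 8) = 7 from rfl,
    show (Fin.succ (2:Fin 8) : Fin 9) = 3 from rfl,
    show (Fin.succ (3:Fin 8) : Fin 9) = 4 from rfl,
    show (Fin.succ (4:Fin 8) : Fin 9) = 5 from rfl,
    show (Fin.succ (5:Fin 8) : Fin 9) = 6 from rfl,
    show (Fin.succ (6:Fin 8) : Fin 9) = 7 from rfl,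
    show (Fin.succ (7:Fin 8) : Fin 9) = 8 from rfl,
    show (Fin.succ (2:Fin 9) : Fin 10) = 3 from rfl,
    show (Fin.succ (3:Fin 9) : Fin 10) = 4 from rfl,
    show (Fin.succ (4:Fin 9) : Fin 10) = 5 from rfl,
    show (Fin.succ (5:Fin 9) : Fin 10) = 6 from rfl,
    show (Fin.succ (6:Fin 9) : Fin 10) = 7 from rfl,
    show (Fin.succ (7:Fin 9) : Fin 10) = 8 from rfl,
    show (Fin.succ (8:Fin 9) : Fin 10) = 9 from rfl,
    show (Fin.succ (2:Fin 10) : Fin 11) = 3 from rfl,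
    show (Fin.succ (3:Fin 10) : Fin 11) = 4 from rfl,
    show (Fin.succ (4:Fin 10) : Fin 11) = 5 from rfl,
    show (Fin.succ (5:Fin 10) : Fin 11) = 6 from rfl,
    show (Fin.succ (6:Fin 10) : Fin 11) = 7 from rfl,
    show (Fin.succ (7:Fin 10) : Fin 11) = 8 from rfl,
    show (Fin.succ (8:Fin 10) : Fin 11) = 9 from rfl,
    show (Fin.succ (9:Fin 10) : Fin 11) = 10 from rfl,
    show (Fin.succ (2:Fin 11) : Fin 12) = 3 from rfl,
    show (Fin.succ (3:Fin 11) : Fin 12) = 4 from rfl,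
    show (Fin.succ (4:Fin 11) : Fin 12) = 5 from rfl,
    show (Fin.succ (5:Fin 11) : Fin 12) = 6 from rfl,
    show (Fin.succ (6:Fin 11) : Fin 12) = 7 from rfl,
    show (Fin.succ (7:Fin 11) : Fin 12) = 8 from rfl,
    show (Fin.succ (8:Fin 11) : Fin 12) = 9 from rfl,
    show (Fin.succ (9:Fin 11) : Fin 12) = 10 from rfl,
    show (Fin.succ (10:Fin 11) : Fin 12) = 11 from rfl,
    show (Fin.succ (2:Fin 12) : Fin 13) = 3 from rfl,
    show (Fin.succ (3:Fin 12) : Fin 13) = 4 from rfl,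
    show (Fin.succ (4:Fin 12) : Fin 13) = 5 from rfl,
    show (Fin.succ (5:Fin 12) : Fin 13) = 6 from rfl,
    show (Fin.succ (6:Fin 12) : Fin 13) = 7 from rfl,
    show (Fin.succ (7:Fin 12) : Fin 13) = 8 from rfl,
    show (Fin.succ (8:Fin 12) : Fin 13) = 9 from rfl,
    show (Fin.succ (9:Fin 12) : Fin 13) = 10 from rfl,
    show (Fin.succ (10:Fin 12) : Fin 13) = 11 from rfl,
    show (Fin.succ (11:Fin 12) : Fin 13) = 12 from rfl]
  abel
private lemma sum5 (f : Fin 5 → M) : ∑ k, f k = f 0 + f 1 + f 2 + f 3 + f 4 := by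
  simp [Fin.sum_univ_succ,
    show (Fin.succ (2:Fin 3) : Fin 4) = 3 from rfl,
    show (Fin.succ (2:Fin 4) : Fin 5) = 3 from rfl,
    show (Fin.succ (3:Fin 4) : Fin 5) = 4 from rfl,
    show (Fin.succ (2:Fin 5) : Fin 6) = 3 from rfl,
    show (Fin.succ (3:Fin 5) : Fin 6) = 4 from rfl,
    show (Fin.succ (4:Fin 5) : Fin 6) = 5 from rfl,
    show (Fin.succ (2:Fin 6) : Fin 7) = 3 from rfl,
    show (Fin.succ (3:Fin 6) : Fin 7) = 4 from rfl,
    show (Fin.succ (4:Fin 6) : Fin 7) = 5 from rfl,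
    show (Fin.succ (5:Fin 6) : Fin 7) = 6 from rfl,
    show (Fin.succ (2:Fin 7) : Fin 8) = 3 from rfl,
    show (Fin.succ (3:Fin 7) : Fin 8) = 4 from rfl,
    show (Fin.succ (4:Fin 7) : Fin 8) = 5 from rfl,
    show (Fin.succ (5:Fin 7) : Fin 8) = 6 from rfl,
    show (Fin.succ (6:Fin 7) : Fin 8) = 7 from rfl,
    show (Fin.succ (2:Fin 8) : Fin 9) = 3 from rfl,
    show (Fin.succ (3:Fin 8) : Fin 9) = 4 from rfl,
    show (Fin.succ (4:Fin 8) : Fin 9) = 5 from rfl,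
    show (Fin.succ (5:Fin 8) : Fin 9) = 6 from rfl,
    show (Fin.succ (6:Fin 8) : Fin 9) = 7 from rfl,
    show (Fin.succ (7:Fin 8) : Fin 9) = 8 from rfl,
    show (Fin.succ (2:Fin 9) : Fin 10) = 3 from rfl,
    show (Fin.succ (3:Fin 9) : Fin 10) = 4 from rfl,
    show (Fin.succ (4:Fin 9) : Fin 10) = 5 from rfl,
    show (Fin.succ (5:Fin 9) : Fin 10) = 6 from rfl,
    show (Fin.succ (6:Fin 9) : Fin 10) = 7 from rfl,
    show (Fin.succ (7:Fin 9) : Fin 10) = 8 from rfl,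
    show (Fin.succ (8:Fin 9) : Fin 10) = 9 from rfl,
    show (Fin.succ (2:Fin 10) : Fin 11) = 3 from rfl,
    show (Fin.succ (3:Fin 10) : Fin 11) = 4 from rfl,
    show (Fin.succ (4:Fin 10) : Fin 11) = 5 from rfl,
    show (Fin.succ (5:Fin 10) : Fin 11) = 6 from rfl,
    show (Fin.succ (6:Fin 10) : Fin 11) = 7 from rfl,
    show (Fin.succ (7:Fin 10) : Fin 11) = 8 from rfl,
    show (Fin.succ (8:Fin 10) : Fin 11) = 9 from rfl,
    show (Fin.succ (9:Fin 10) : Fin 11) = 10 from rfl,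
    show (Fin.succ (2:Fin 11) : Fin 12) = 3 from rfl,
    show (Fin.succ (3:Fin 11) : Fin 12) = 4 from rfl,
    show (Fin.succ (4:Fin 11) : Fin 12) = 5 from rfl,
    show (Fin.succ (5:Fin 11) : Fin 12) = 6 from rfl,
    show (Fin.succ (6:Fin 11) : Fin 12) = 7 from rfl,
    show (Fin.succ (7:Fin 11) : Fin 12) = 8 from rfl,
    show (Fin.succ (8:Fin 11) : Fin 12) = 9 from rfl,
    show (Fin.succ (9:Fin 11) : Fin 12) = 10 from rfl,
    show (Fin.succ (10:Fin 11) : Fin 12) = 11 from rfl,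
    show (Fin.succ (2:Fin 12) : Fin 13) = 3 from rfl,
    show (Fin.succ (3:Fin 12) : Fin 13) = 4 from rfl,
    show (Fin.succ (4:Fin 12) : Fin 13) = 5 from rfl,
    show (Fin.succ (5:Fin 12) : Fin 13) = 6 from rfl,
    show (Fin.succ (6:Fin 12) : Fin 13) = 7 from rfl,
    show (Fin.succ (7:Fin 12) : Fin 13) = 8 from rfl,
    show (Fin.succ (8:Fin 12) : Fin 13) = 9 from rfl,
    show (Fin.succ (9:Fin 12) : Fin 13) = 10 from rfl,
    show (Fin.succ (10:Fin 12) : Fin 13) = 11 from rfl,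
    show (Fin.succ (11:Fin 12) : Fin 13) = 12 from rfl]
  abel
end SumExpand

private lemma v13_0 : ((0 : Fin 13) : ℕ) = 0 := rfl
private lemma v13_1 : ((1 : Fin 13) : ℕ) = 1 := rfl
private lemma v13_2 : ((2 : Fin 13) : ℕ) = 2 := rfl
private lemma v13_3 : ((3 : Fin 13) : ℕ) = 3 := rfl
private lemma v13_4 : ((4 : Fin 13) : ℕ) = 4 := rfl
private lemma v13_5 : ((5 : Fin 13) : ℕ) = 5 := rfl
private lemma v13_6 : ((6 : Fin 13) : ℕ) = 6 := rfl
private lemma v13_7 : ((7 : Fin 13) : ℕ) = 7 := rfl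
private lemma v13_8 : ((8 : Fin 13) : ℕ) = 8 := rfl
private lemma v13_9 : ((9 : Fin 13) : ℕ) = 9 := rfl
private lemma v13_10 : ((10 : Fin 13) : ℕ) = 10 := rfl
private lemma v13_11 : ((11 : Fin 13) : ℕ) = 11 := rfl
private lemma v13_12 : ((12 : Fin 13) : ℕ) = 12 := rfl
private lemma v9_0 : ((0 : Fin 9) : ℕ) = 0 := rfl
private lemma v9_1 : ((1 : Fin 9) : ℕ) = 1 := rfl
private lemma v9_2 : ((2 : Fin 9) : ℕ) = 2 := rfl
private lemma v9_3 : ((3 : Fin 9) : ℕ) = 3 := rfl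
private lemma v9_4 : ((4 : Fin 9) : ℕ) = 4 := rfl
private lemma v9_5 : ((5 : Fin 9) : ℕ) = 5 := rfl
private lemma v9_6 : ((6 : Fin 9) : ℕ) = 6 := rfl
private lemma v9_7 : ((7 : Fin 9) : ℕ) = 7 := rfl
private lemma v9_8 : ((8 : Fin 9) : ℕ) = 8 := rfl
private lemma v7_0 : ((0 : Fin 7) : ℕ) = 0 := rfl
private lemma v7_1 : ((1 : Fin 7) : ℕ) = 1 := rfl
private lemma v7_2 : ((2 : Fin 7) : ℕ) = 2 := rfl
private lemma v7_3 : ((3 : Fin 7) : ℕ) = 3 := rfl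
private lemma v7_4 : ((4 : Fin 7) : ℕ) = 4 := rfl
private lemma v7_5 : ((5 : Fin 7) : ℕ) = 5 := rfl
private lemma v7_6 : ((6 : Fin 7) : ℕ) = 6 := rfl
private lemma v5_0 : ((0 : Fin 5) : ℕ) = 0 := rfl
private lemma v5_1 : ((1 : Fin 5) : ℕ) = 1 := rfl
private lemma v5_2 : ((2 : Fin 5) : ℕ) = 2 := rfl
private lemma v5_3 : ((3 : Fin 5) : ℕ) = 3 := rfl
private lemma v5_4 : ((4 : Fin 5) : ℕ) = 4 := rfl

private lemma idx13_0 (h : (((0 : Fin 7) : ℕ) + 6) < 13) : (⟨((0 : Fin 7) : ℕ) + 6, h⟩ : Fin 13) = 6 := rfl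
private lemma idx13_1 (h : (((1 : Fin 7) : ℕ) + 6) < 13) : (⟨((1 : Fin 7) : ℕ) + 6, h⟩ : Fin 13) = 7 := rfl
private lemma idx13_2 (h : (((2 : Fin 7) : ℕ) + 6) < 13) : (⟨((2 : Fin 7) : ℕ) + 6, h⟩ : Fin 13) = 8 := rfl
private lemma idx13_3 (h : (((3 : Fin 7) : ℕ) + 6) < 13) : (⟨((3 : Fin 7) : ℕ) + 6, h⟩ : Fin 13) = 9 := rfl
private lemma idx13_4 (h : (((4 : Fin 7) : ℕ) + 6) < 13) : (⟨((4 : Fin 7) : ℕ) + 6, h⟩ : Fin 13) = 10 := rfl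
private lemma idx13_5 (h : (((5 : Fin 7) : ℕ) + 6) < 13) : (⟨((5 : Fin 7) : ℕ) + 6, h⟩ : Fin 13) = 11 := rfl
private lemma idx13_6 (h : (((6 : Fin 7) : ℕ) + 6) < 13) : (⟨((6 : Fin 7) : ℕ) + 6, h⟩ : Fin 13) = 12 := rfl
private lemma idx9_0 (h : (((0 : Fin 5) : ℕ) + 4) < 9) : (⟨((0 : Fin 5) : ℕ) + 4, h⟩ : Fin 9) = 4 := rfl
private lemma idx9_1 (h : (((1 : Fin 5) : ℕ) + 4) < 9) : (⟨((1 : Fin 5) : ℕ) + 4, h⟩ : Fin 9) = 5 := rfl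
private lemma idx9_2 (h : (((2 : Fin 5) : ℕ) + 4) < 9) : (⟨((2 : Fin 5) : ℕ) + 4, h⟩ : Fin 9) = 6 := rfl
private lemma idx9_3 (h : (((3 : Fin 5) : ℕ) + 4) < 9) : (⟨((3 : Fin 5) : ℕ) + 4, h⟩ : Fin 9) = 7 := rfl
private lemma idx9_4 (h : (((4 : Fin 5) : ℕ) + 4) < 9) : (⟨((4 : Fin 5) : ℕ) + 4, h⟩ : Fin 9) = 8 := rfl
private lemma mk13_6 (h : 6 < 13) : (⟨6, h⟩ : Fin 13) = 6 := rfl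
private lemma mk13_7 (h : 7 < 13) : (⟨7, h⟩ : Fin 13) = 7 := rfl
private lemma mk13_8 (h : 8 < 13) : (⟨8, h⟩ : Fin 13) = 8 := rfl
private lemma mk13_9 (h : 9 < 13) : (⟨9, h⟩ : Fin 13) = 9 := rfl
private lemma mk13_10 (h : 10 < 13) : (⟨10, h⟩ : Fin 13) = 10 := rfl
private lemma mk13_11 (h : 11 < 13) : (⟨11, h⟩ : Fin 13) = 11 := rfl
private lemma mk13_12 (h : 12 < 13) : (⟨12, h⟩ : Fin 13) = 12 := rfl
private lemma mk9_4 (h : 4 < 9) : (⟨4, h⟩ : Fin 9) = 4 := rfl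
private lemma mk9_5 (h : 5 < 9) : (⟨5, h⟩ : Fin 9) = 5 := rfl
private lemma mk9_6 (h : 6 < 9) : (⟨6, h⟩ : Fin 9) = 6 := rfl
private lemma mk9_7 (h : 7 < 9) : (⟨7, h⟩ : Fin 9) = 7 := rfl
private lemma mk9_8 (h : 8 < 9) : (⟨8, h⟩ : Fin 9) = 8 := rfl


set_option maxHeartbeats 16000000 in
/-- Appendix E of the paper: non-commutativity of stable degeneration and the
map to Weierstrass form.  Work in `ℚ[s11, s12, s13, s21, s22, s31, s32, s42, s52, s62, s72,
s82, U, V, μ]` (variables `X 0, …, X 14`).  The K3 hypersurface `χ` has coefficients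
`s₁ = s11·U² + s12·U·V + s13·V²`, `sᵢ = s_{i1}·U² + s_{i2}·U·V` for `i = 2, 3` and
`sᵢ = s_{i2}·U·V` for `4 ≤ i ≤ 8`; its half `χ⁺` has coefficients `s₁⁺ = s12·U + s13·μ`,
`sᵢ⁺ = s_{i2}·U`.  Writing the Weierstrass coefficients of the full `χ` as
`g_χ = Σ_{k=0}^{12} c_k U^{12-k} V^k` and `f_χ = Σ_{k=0}^{8} d_k U^{8-k} V^k` with `c_k, d_k`
polynomials in the `s`-variables only, the "split-after-Weierstrass" coefficients are
`g'⁺ = Σ_{j=0}^{6} c_{j+6} U^{6-j} μ^j` and `f'⁺ = Σ_{j=0}^{4} d_{j+4} U^{4-j} μ^j`.  Then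
`g_χ⁺ - g'⁺ = (2/3)·U⁶·s13·s31·s72²·s82²` while `f_χ⁺ = f'⁺`; in particular, whenever
`s13·s31·s72·s82 ≠ 0` the two operations do not commute. -/
theorem stmt_16 :
    let R := MvPolynomial (Fin 15) ℚ
    let s11 : R := X 0
    let s12 : R := X 1
    let s13 : R := X 2
    let s21 : R := X 3
    let s22 : R := X 4
    let s31 : R := X 5
    let s32 : R := X 6
    let s42 : R := X 7
    let s52 : R := X 8
    let s62 : R := X 9
    let s72 : R := X 10
    let s82 : R := X 11
    let U : R := X 12
    let V : R := X 13
    let μ : R := X 14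
    let ρ : MvPolynomial (Fin 12) ℚ →ₐ[ℚ] R :=
      rename (Fin.castLE (by norm_num : (12 : ℕ) ≤ 15))
    let sfull : Fin 8 → R :=
      ![s11 * U ^ 2 + s12 * U * V + s13 * V ^ 2, s21 * U ^ 2 + s22 * U * V,
        s31 * U ^ 2 + s32 * U * V, s42 * U * V, s52 * U * V, s62 * U * V,
        s72 * U * V, s82 * U * V]
    let splus : Fin 8 → R :=
      ![s12 * U + s13 * μ, s22 * U, s32 * U, s42 * U, s52 * U, s62 * U, s72 * U, s82 * U]
    ∀ (c : Fin 13 → MvPolynomial (Fin 12) ℚ) (d : Fin 9 → MvPolynomial (Fin 12) ℚ),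
      quarticWeierstrassG sfull
        = ∑ k : Fin 13, ρ (c k) * U ^ (12 - (k : ℕ)) * V ^ (k : ℕ) →
      quarticWeierstrassF sfull
        = ∑ k : Fin 9, ρ (d k) * U ^ (8 - (k : ℕ)) * V ^ (k : ℕ) →
      (quarticWeierstrassG splus
          - ∑ j : Fin 7, ρ (c ⟨(j : ℕ) + 6, by have := j.isLt; omega⟩)
              * U ^ (6 - (j : ℕ)) * μ ^ (j : ℕ)
        = ((2 : ℚ) / 3) • (U ^ 6 * s13 * s31 * s72 ^ 2 * s82 ^ 2)) ∧
      quarticWeierstrassF splus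
        = ∑ j : Fin 5, ρ (d ⟨(j : ℕ) + 4, by have := j.isLt; omega⟩)
            * U ^ (4 - (j : ℕ)) * μ ^ (j : ℕ) := by
  dsimp only
  intro c d hg hf
  have hGfull : 864 * quarticWeierstrassG (![X 0 * X 12 ^ 2 + X 1 * X 12 * X 13 + X 2 * X 13 ^ 2, X 3 * X 12 ^ 2 + X 4 * X 12 * X 13, X 5 * X 12 ^ 2 + X 6 * X 12 * X 13, X 7 * X 12 * X 13, X 8 * X 12 * X 13, X 9 * X 12 * X 13, X 10 * X 12 * X 13, X 11 * X 12 * X 13] : Fin 8 → MvPolynomial (Fin 15) ℚ) =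
      ((X 9 * X 12 * X 13) ^ 2 + 4 * (-((X 8 * X 12 * X 13) * (X 10 * X 12 * X 13)) - (X 5 * X 12 ^ 2 + X 6 * X 12 * X 13) * (X 11 * X 12 * X 13))) ^ 3 - 36 * ((X 9 * X 12 * X 13) ^ 2 + 4 * (-((X 8 * X 12 * X 13) * (X 10 * X 12 * X 13)) - (X 5 * X 12 ^ 2 + X 6 * X 12 * X 13) * (X 11 * X 12 * X 13))) * ((X 9 * X 12 * X 13) * (-((X 7 * X 12 * X 13) * (X 8 * X 12 * X 13) * (X 11 * X 12 * X 13)) - (X 3 * X 12 ^ 2 + X 4 * X 12 * X 13) * (X 10 * X 12 * X 13) * (X 11 * X 12 * X 13)) + 2 * ((X 5 * X 12 ^ 2 + X 6 * X 12 * X 13) * (X 8 * X 12 * X 13) * (X 10 * X 12 * X 13) * (X 11 * X 12 * X 13) + (X 0 * X 12 ^ 2 + X 1 * X 12 * X 13 + X 2 * X 13 ^ 2) * (X 10 * X 12 * X 13) ^ 2 * (X 11 * X 12 * X 13) + (X 3 * X 12 ^ 2 + X 4 * X 12 * X 13) * (X 7 * X 12 * X 13) * (X 11 * X 12 * X 13)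 ^ 2)) + 216 * ((-((X 7 * X 12 * X 13) * (X 8 * X 12 * X 13) * (X 11 * X 12 * X 13)) - (X 3 * X 12 ^ 2 + X 4 * X 12 * X 13) * (X 10 * X 12 * X 13) * (X 11 * X 12 * X 13)) ^ 2 + 4 * (-((X 0 * X 12 ^ 2 + X 1 * X 12 * X 13 + X 2 * X 13 ^ 2) * (X 5 * X 12 ^ 2 + X 6 * X 12 * X 13) * (X 10 * X 12 * X 13) ^ 2 * (X 11 * X 12 * X 13) ^ 2) - (X 0 * X 12 ^ 2 + X 1 * X 12 * X 13 + X 2 * X 13 ^ 2) * (X 7 * X 12 * X 13) ^ 2 * (X 11 * X 12 * X 13) ^ 3 + (X 7 * X 12 * X 13) * (X 10 * X 12 * X 13) * (-((X 3 * X 12 ^ 2 + X 4 * X 12 * X 13) * (X 8 * X 12 * X 13) * (X 11 * X 12 * X 13) ^ 2) + (X 0 * X 12 ^ 2 + X 1 * X 12 * X 13 + X 2 * X 13 ^ 2) * (X 9 * X 12 * X 13) * (X 11 * X 12 * X 13) ^ 2))) := by rw [Gmul]; simp only [vec8_0, vec8_1, vec8_2, vec8_3, vec8_4, vec8_5, vec8_6,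 vec8_7]
  have hFfull : 48 * quarticWeierstrassF (![X 0 * X 12 ^ 2 + X 1 * X 12 * X 13 + X 2 * X 13 ^ 2, X 3 * X 12 ^ 2 + X 4 * X 12 * X 13, X 5 * X 12 ^ 2 + X 6 * X 12 * X 13, X 7 * X 12 * X 13, X 8 * X 12 * X 13, X 9 * X 12 * X 13, X 10 * X 12 * X 13, X 11 * X 12 * X 13] : Fin 8 → MvPolynomial (Fin 15) ℚ) =
      -(((X 9 * X 12 * X 13) ^ 2 + 4 * (-((X 8 * X 12 * X 13) * (X 10 * X 12 * X 13)) - (X 5 * X 12 ^ 2 + X 6 * X 12 * X 13) * (X 11 * X 12 * X 13))) ^ 2 - 24 * ((X 9 * X 12 * X 13) * (-((X 7 * X 12 * X 13) * (X 8 * X 12 * X 13) * (X 11 * X 12 * X 13)) - (X 3 * X 12 ^ 2 + X 4 * X 12 * X 13) * (X 10 * X 12 * X 13) * (X 11 * X 12 * X 13)) + 2 * ((X 5 * X 12 ^ 2 + X 6 * X 12 * X 13) * (X 8 * X 12 * X 13) * (X 10 * X 12 * X 13) * (X 11 * X 12 * X 13) + (X 0 * X 12 ^ 2 + X 1 * X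 12 * X 13 + X 2 * X 13 ^ 2) * (X 10 * X 12 * X 13) ^ 2 * (X 11 * X 12 * X 13) + (X 3 * X 12 ^ 2 + X 4 * X 12 * X 13) * (X 7 * X 12 * X 13) * (X 11 * X 12 * X 13) ^ 2))) := by rw [Fmul]; simp only [vec8_0, vec8_1, vec8_2, vec8_3, vec8_4, vec8_5, vec8_6, vec8_7]
  have hg2 : ((X 9 * X 12 * X 13) ^ 2 + 4 * (-((X 8 * X 12 * X 13) * (X 10 * X 12 * X 13)) - (X 5 * X 12 ^ 2 + X 6 * X 12 * X 13) * (X 11 * X 12 * X 13))) ^ 3 - 36 * ((X 9 * X 12 * X 13) ^ 2 + 4 * (-((X 8 * X 12 * X 13) * (X 10 * X 12 * X 13)) - (X 5 * X 12 ^ 2 + X 6 * X 12 * X 13) * (X 11 * X 12 * X 13))) * ((X 9 * X 12 * X 13) * (-((X 7 * X 12 * X 13) * (X 8 * X 12 * X 13) * (X 11 * X 12 * X 13)) - (X 3 * X 12 ^ 2 + X 4 * X 12 * X 13) * (X 10 * X 12 * X 13) * (X 11 * X 12 * X 13)) + 2 * ((X 5 * X 12 ^ 2 + X 6 * X 12 *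 X 13) * (X 8 * X 12 * X 13) * (X 10 * X 12 * X 13) * (X 11 * X 12 * X 13) + (X 0 * X 12 ^ 2 + X 1 * X 12 * X 13 + X 2 * X 13 ^ 2) * (X 10 * X 12 * X 13) ^ 2 * (X 11 * X 12 * X 13) + (X 3 * X 12 ^ 2 + X 4 * X 12 * X 13) * (X 7 * X 12 * X 13) * (X 11 * X 12 * X 13) ^ 2)) + 216 * ((-((X 7 * X 12 * X 13) * (X 8 * X 12 * X 13) * (X 11 * X 12 * X 13)) - (X 3 * X 12 ^ 2 + X 4 * X 12 * X 13) * (X 10 * X 12 * X 13) * (X 11 * X 12 * X 13)) ^ 2 + 4 * (-((X 0 * X 12 ^ 2 + X 1 * X 12 * X 13 + X 2 * X 13 ^ 2) * (X 5 * X 12 ^ 2 + X 6 * X 12 * X 13) * (X 10 * X 12 * X 13) ^ 2 * (X 11 * X 12 * X 13) ^ 2) - (X 0 * X 12 ^ 2 + X 1 * X 12 * X 13 + X 2 * X 13 ^ 2) * (X 7 * X 12 * X 13) ^ 2 * (X 11 * X 12 * X 13) ^ 3 + (X 7 * X 12 * X 13) * (X 10 * X 12 * X 13) * (-((X 3 *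 X 12 ^ 2 + X 4 * X 12 * X 13) * (X 8 * X 12 * X 13) * (X 11 * X 12 * X 13) ^ 2) + (X 0 * X 12 ^ 2 + X 1 * X 12 * X 13 + X 2 * X 13 ^ 2) * (X 9 * X 12 * X 13) * (X 11 * X 12 * X 13) ^ 2))) =
      864 * (∑ k : Fin 13, rename (Fin.castLE (by norm_num : (12:ℕ) ≤ 15)) (c k) * X 12 ^ (12 - (k : ℕ)) * X 13 ^ (k : ℕ)) := by
    rw [← hGfull, hg]
  have hfS : -(((X 9 * X 12 * X 13) ^ 2 + 4 * (-((X 8 * X 12 * X 13) * (X 10 * X 12 * X 13)) - (X 5 * X 12 ^ 2 + X 6 * X 12 * X 13) * (X 11 * X 12 * X 13))) ^ 2 - 24 * ((X 9 * X 12 * X 13) * (-((X 7 * X 12 * X 13) * (X 8 * X 12 * X 13) * (X 11 * X 12 * X 13)) - (X 3 * X 12 ^ 2 + X 4 * X 12 * X 13) * (X 10 * X 12 * X 13) * (X 11 * X 12 * X 13)) + 2 * ((X 5 * X 12 ^ 2 + X 6 * X 12 * X 13) * (X 8 * X 12 * X 13) * (X 10 * X 12 * X 13) * (X 11 * X 12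 * X 13) + (X 0 * X 12 ^ 2 + X 1 * X 12 * X 13 + X 2 * X 13 ^ 2) * (X 10 * X 12 * X 13) ^ 2 * (X 11 * X 12 * X 13) + (X 3 * X 12 ^ 2 + X 4 * X 12 * X 13) * (X 7 * X 12 * X 13) * (X 11 * X 12 * X 13) ^ 2))) =
      48 * (∑ k : Fin 9, rename (Fin.castLE (by norm_num : (12:ℕ) ≤ 15)) (d k) * X 12 ^ (8 - (k : ℕ)) * X 13 ^ (k : ℕ)) := by
    rw [← hFfull, hf]
  rw [sum13] at hg2
  rw [sum9] at hfS
  norm_num [v13_0, v13_1, v13_2, v13_3, v13_4, v13_5, v13_6, v13_7, v13_8, v13_9, v13_10, v13_11, v13_12] at hg2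
  norm_num [v9_0, v9_1, v9_2, v9_3, v9_4, v9_5, v9_6, v9_7, v9_8] at hfS
  have h0 := congrArg (⇑(ev (0 : MvPolynomial (Fin 15) ℚ))) hg2
  simp only [map_ofNat, map_mul, map_add, map_sub, map_neg, map_pow, map_one, ev_X13, ev_rename, ev_X0, ev_X1, ev_X2, ev_X3, ev_X4, ev_X5, ev_X6, ev_X7, ev_X8, ev_X9, ev_X10, ev_X11, ev_X12, ev_X14] at h0
  have h1 := congrArg (⇑(ev (1 : MvPolynomial (Fin 15) ℚ))) hg2
  simp only [map_ofNat, map_mul, map_add, map_sub, map_neg, map_pow, map_one, ev_X13, ev_rename, ev_X0, ev_X1, ev_X2, ev_X3, ev_X4, ev_X5, ev_X6, ev_X7, ev_X8, ev_X9, ev_X10, ev_X11, ev_X12, ev_X14] at h1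
  have h2 := congrArg (⇑(ev (2 : MvPolynomial (Fin 15) ℚ))) hg2
  simp only [map_ofNat, map_mul, map_add, map_sub, map_neg, map_pow, map_one, ev_X13, ev_rename, ev_X0, ev_X1, ev_X2, ev_X3, ev_X4, ev_X5, ev_X6, ev_X7, ev_X8, ev_X9, ev_X10, ev_X11, ev_X12, ev_X14] at h2
  have h3 := congrArg (⇑(ev (3 : MvPolynomial (Fin 15) ℚ))) hg2
  simp only [map_ofNat, map_mul, map_add, map_sub, map_neg, map_pow, map_one, ev_X13, ev_rename, ev_X0, ev_X1, ev_X2, ev_X3, ev_X4, ev_X5, ev_X6, ev_X7, ev_X8, ev_X9, ev_X10, ev_X11, ev_X12, ev_X14] at h3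
  have h4 := congrArg (⇑(ev (4 : MvPolynomial (Fin 15) ℚ))) hg2
  simp only [map_ofNat, map_mul, map_add, map_sub, map_neg, map_pow, map_one, ev_X13, ev_rename, ev_X0, ev_X1, ev_X2, ev_X3, ev_X4, ev_X5, ev_X6, ev_X7, ev_X8, ev_X9, ev_X10, ev_X11, ev_X12, ev_X14] at h4
  have h5 := congrArg (⇑(ev (5 : MvPolynomial (Fin 15) ℚ))) hg2
  simp only [map_ofNat, map_mul, map_add, map_sub, map_neg, map_pow, map_one, ev_X13, ev_rename, ev_X0, ev_X1, ev_X2, ev_X3, ev_X4, ev_X5, ev_X6, ev_X7, ev_X8, ev_X9, ev_X10, ev_X11, ev_X12, ev_X14] at h5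
  have h6 := congrArg (⇑(ev (6 : MvPolynomial (Fin 15) ℚ))) hg2
  simp only [map_ofNat, map_mul, map_add, map_sub, map_neg, map_pow, map_one, ev_X13, ev_rename, ev_X0, ev_X1, ev_X2, ev_X3, ev_X4, ev_X5, ev_X6, ev_X7, ev_X8, ev_X9, ev_X10, ev_X11, ev_X12, ev_X14] at h6
  have h7 := congrArg (⇑(ev (7 : MvPolynomial (Fin 15) ℚ))) hg2
  simp only [map_ofNat, map_mul, map_add, map_sub, map_neg, map_pow, map_one, ev_X13, ev_rename, ev_X0, ev_X1, ev_X2, ev_X3, ev_X4, ev_X5, ev_X6, ev_X7, ev_X8, ev_X9, ev_X10, ev_X11, ev_X12, ev_X14] at h7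
  have h8 := congrArg (⇑(ev (8 : MvPolynomial (Fin 15) ℚ))) hg2
  simp only [map_ofNat, map_mul, map_add, map_sub, map_neg, map_pow, map_one, ev_X13, ev_rename, ev_X0, ev_X1, ev_X2, ev_X3, ev_X4, ev_X5, ev_X6, ev_X7, ev_X8, ev_X9, ev_X10, ev_X11, ev_X12, ev_X14] at h8
  have h9 := congrArg (⇑(ev (9 : MvPolynomial (Fin 15) ℚ))) hg2
  simp only [map_ofNat, map_mul, map_add, map_sub, map_neg, map_pow, map_one, ev_X13, ev_rename, ev_X0, ev_X1, ev_X2, ev_X3, ev_X4, ev_X5, ev_X6, ev_X7, ev_X8, ev_X9, ev_X10, ev_X11, ev_X12, ev_X14] at h9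
  have h10 := congrArg (⇑(ev (10 : MvPolynomial (Fin 15) ℚ))) hg2
  simp only [map_ofNat, map_mul, map_add, map_sub, map_neg, map_pow, map_one, ev_X13, ev_rename, ev_X0, ev_X1, ev_X2, ev_X3, ev_X4, ev_X5, ev_X6, ev_X7, ev_X8, ev_X9, ev_X10, ev_X11, ev_X12, ev_X14] at h10
  have h11 := congrArg (⇑(ev (11 : MvPolynomial (Fin 15) ℚ))) hg2
  simp only [map_ofNat, map_mul, map_add, map_sub, map_neg, map_pow, map_one, ev_X13, ev_rename, ev_X0, ev_X1, ev_X2, ev_X3, ev_X4, ev_X5, ev_X6, ev_X7, ev_X8, ev_X9, ev_X10, ev_X11, ev_X12, ev_X14] at h11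
  have h12 := congrArg (⇑(ev (12 : MvPolynomial (Fin 15) ℚ))) hg2
  simp only [map_ofNat, map_mul, map_add, map_sub, map_neg, map_pow, map_one, ev_X13, ev_rename, ev_X0, ev_X1, ev_X2, ev_X3, ev_X4, ev_X5, ev_X6, ev_X7, ev_X8, ev_X9, ev_X10, ev_X11, ev_X12, ev_X14] at h12
  have hf0 := congrArg (⇑(ev (0 : MvPolynomial (Fin 15) ℚ))) hfS
  simp only [map_ofNat, map_mul, map_add, map_sub, map_neg, map_pow, map_one, ev_X13, ev_rename, ev_X0, ev_X1, ev_X2, ev_X3, ev_X4, ev_X5, ev_X6, ev_X7, ev_X8, ev_X9, ev_X10, ev_X11, ev_X12, ev_X14] at hf0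
  have hf1 := congrArg (⇑(ev (1 : MvPolynomial (Fin 15) ℚ))) hfS
  simp only [map_ofNat, map_mul, map_add, map_sub, map_neg, map_pow, map_one, ev_X13, ev_rename, ev_X0, ev_X1, ev_X2, ev_X3, ev_X4, ev_X5, ev_X6, ev_X7, ev_X8, ev_X9, ev_X10, ev_X11, ev_X12, ev_X14] at hf1
  have hf2 := congrArg (⇑(ev (2 : MvPolynomial (Fin 15) ℚ))) hfS
  simp only [map_ofNat, map_mul, map_add, map_sub, map_neg, map_pow, map_one, ev_X13, ev_rename, ev_X0, ev_X1, ev_X2, ev_X3, ev_X4, ev_X5, ev_X6, ev_X7, ev_X8, ev_X9, ev_X10, ev_X11, ev_X12, ev_X14] at hf2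
  have hf3 := congrArg (⇑(ev (3 : MvPolynomial (Fin 15) ℚ))) hfS
  simp only [map_ofNat, map_mul, map_add, map_sub, map_neg, map_pow, map_one, ev_X13, ev_rename, ev_X0, ev_X1, ev_X2, ev_X3, ev_X4, ev_X5, ev_X6, ev_X7, ev_X8, ev_X9, ev_X10, ev_X11, ev_X12, ev_X14] at hf3
  have hf4 := congrArg (⇑(ev (4 : MvPolynomial (Fin 15) ℚ))) hfS
  simp only [map_ofNat, map_mul, map_add, map_sub, map_neg, map_pow, map_one, ev_X13, ev_rename, ev_X0, ev_X1, ev_X2, ev_X3, ev_X4, ev_X5, ev_X6, ev_X7, ev_X8, ev_X9, ev_X10, ev_X11, ev_X12, ev_X14] at hf4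
  have hf5 := congrArg (⇑(ev (5 : MvPolynomial (Fin 15) ℚ))) hfS
  simp only [map_ofNat, map_mul, map_add, map_sub, map_neg, map_pow, map_one, ev_X13, ev_rename, ev_X0, ev_X1, ev_X2, ev_X3, ev_X4, ev_X5, ev_X6, ev_X7, ev_X8, ev_X9, ev_X10, ev_X11, ev_X12, ev_X14] at hf5
  have hf6 := congrArg (⇑(ev (6 : MvPolynomial (Fin 15) ℚ))) hfS
  simp only [map_ofNat, map_mul, map_add, map_sub, map_neg, map_pow, map_one, ev_X13, ev_rename, ev_X0, ev_X1, ev_X2, ev_X3, ev_X4, ev_X5, ev_X6, ev_X7, ev_X8, ev_X9, ev_X10, ev_X11, ev_X12, ev_X14] at hf6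
  have hf7 := congrArg (⇑(ev (7 : MvPolynomial (Fin 15) ℚ))) hfS
  simp only [map_ofNat, map_mul, map_add, map_sub, map_neg, map_pow, map_one, ev_X13, ev_rename, ev_X0, ev_X1, ev_X2, ev_X3, ev_X4, ev_X5, ev_X6, ev_X7, ev_X8, ev_X9, ev_X10, ev_X11, ev_X12, ev_X14] at hf7
  have hf8 := congrArg (⇑(ev (8 : MvPolynomial (Fin 15) ℚ))) hfS
  simp only [map_ofNat, map_mul, map_add, map_sub, map_neg, map_pow, map_one, ev_X13, ev_rename, ev_X0, ev_X1, ev_X2, ev_X3, ev_X4, ev_X5, ev_X6, ev_X7, ev_X8, ev_X9, ev_X10, ev_X11, ev_X12, ev_X14] at hf8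
  refine ⟨?_, ?_⟩
  · have hGplus' : (413857382400 : MvPolynomial (Fin 15) ℚ) * quarticWeierstrassG (![X 1 * X 12 + X 2 * X 14, X 4 * X 12, X 6 * X 12, X 7 * X 12, X 8 * X 12, X 9 * X 12, X 10 * X 12, X 11 * X 12] : Fin 8 → MvPolynomial (Fin 15) ℚ) =
        479001600 * (((X 9 * X 12) ^ 2 + 4 * (-((X 8 * X 12) * (X 10 * X 12)) - (X 6 * X 12) * (X 11 * X 12))) ^ 3 - 36 * ((X 9 * X 12) ^ 2 + 4 * (-((X 8 * X 12) * (X 10 * X 12)) - (X 6 * X 12) * (X 11 * X 12))) * ((X 9 * X 12) * (-((X 7 * X 12) * (X 8 * X 12) * (X 11 * X 12)) - (X 4 * X 12) * (X 10 * X 12) * (X 11 * X 12)) + 2 * ((X 6 * X 12) * (X 8 * X 12) * (X 10 * X 12) * (X 11 * X 12) + (X 1 * X 12 + X 2 * X 14) * (X 10 * X 12) ^ 2 * (X 11 * X 12) + (X 4 * X 12) * (X 7 * X 12) * (X 11 * X 12) ^ 2)) + 216 * ((-((X 7 * X 12) * (X 8 * X 12) * (X 11 * X 12)) - (X 4 *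 X 12) * (X 10 * X 12) * (X 11 * X 12)) ^ 2 + 4 * (-((X 1 * X 12 + X 2 * X 14) * (X 6 * X 12) * (X 10 * X 12) ^ 2 * (X 11 * X 12) ^ 2) - (X 1 * X 12 + X 2 * X 14) * (X 7 * X 12) ^ 2 * (X 11 * X 12) ^ 3 + (X 7 * X 12) * (X 10 * X 12) * (-((X 4 * X 12) * (X 8 * X 12) * (X 11 * X 12) ^ 2) + (X 1 * X 12 + X 2 * X 14) * (X 9 * X 12) * (X 11 * X 12) ^ 2)))) := by
      rw [show (413857382400 : MvPolynomial (Fin 15) ℚ) = 479001600 * 864 from by norm_num, mul_assoc, Gmul]; simp only [vec8_0, vec8_1, vec8_2, vec8_3, vec8_4, vec8_5, vec8_6, vec8_7]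
    refine qsmul_cancel (q := (413857382400 : ℚ)) (by norm_num) ?_
    rw [smul_sub, smul_smul]
    rw [show (413857382400 : ℚ) * ((2:ℚ)/3) = (275904921600 : ℚ) from by norm_num]
    rw [sum7]
    simp only [MvPolynomial.smul_eq_C_mul, map_ofNat]
    rw [hGplus']
    simp only [idx13_0, idx13_1, idx13_2, idx13_3, idx13_4, idx13_5, idx13_6, v7_0, v7_1, v7_2, v7_3, v7_4, v7_5, v7_6]
    norm_num
    simp only [mk13_6, mk13_7, mk13_8, mk13_9, mk13_10, mk13_11, mk13_12]
    linear_combination (norm := ring1)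
      (44990231 - 6926634 * X 14 + 749463 * X 14 ^ 2 - 55770 * X 14 ^ 3 + 2717 * X 14 ^ 4 - 78 * X 14 ^ 5 + 1 * X 14 ^ 6) * h0
        + ((-465119160) + 74763612 * X 14 - 8355996 * X 14 ^ 2 + 637560 * X 14 ^ 3 - 31680 * X 14 ^ 4 + 924 * X 14 ^ 5 - 12 * X 14 ^ 6) * h1
        + (2226159870 - 371597688 * X 14 + 42780078 * X 14 ^ 2 - 3342240 * X 14 ^ 3 + 169290 * X 14 ^ 4 - 5016 * X 14 ^ 5 + 66 * X 14 ^ 6) * h2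
        + ((-6523342760) + 1124836020 * X 14 - 133007820 * X 14 ^ 2 + 10624680 * X 14 ^ 3 - 548240 * X 14 ^ 4 + 16500 * X 14 ^ 5 - 220 * X 14 ^ 6) * h3
        + (13031171505 - 2309748210 * X 14 + 279733905 * X 14 ^ 2 - 22812570 * X 14 ^ 3 + 1198395 * X 14 ^ 4 - 36630 * X 14 ^ 5 + 495 * X 14 ^ 6) * h4
        + ((-18685169712) + 3389418648 * X 14 - 419295096 * X 14 ^ 2 + 34855920 * X 14 ^ 3 - 1862784 * X 14 ^ 4 + 57816 * X 14 ^ 5 - 792 * X 14 ^ 6) * h5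
        + (19705348740 - 3644270784 * X 14 + 459323172 * X 14 ^ 2 - 38863440 * X 14 ^ 3 + 2111340 * X 14 ^ 4 - 66528 * X 14 ^ 5 + 924 * X 14 ^ 6) * h6
        + ((-15387443280) + 2892117096 * X 14 - 370539576 * X 14 ^ 2 + 31862160 * X 14 ^ 3 - 1758240 * X 14 ^ 4 + 56232 * X 14 ^ 5 - 792 * X 14 ^ 6) * h7
        + (8822693385 - 1680933870 * X 14 + 218468745 * X 14 ^ 2 - 19064430 * X 14 ^ 3 + 1067715 * X 14 ^ 4 - 34650 * X 14 ^ 5 + 495 * X 14 ^ 6) * h8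
        + ((-3619561880) + 697587660 * X 14 - 91807980 * X 14 ^ 2 + 8119320 * X 14 ^ 3 - 461120 * X 14 ^ 4 + 15180 * X 14 ^ 5 - 220 * X 14 ^ 6) * h9
        + (1007832606 - 196152264 * X 14 + 26100558 * X 14 ^ 2 - 2336400 * X 14 ^ 3 + 134442 * X 14 ^ 4 - 4488 * X 14 ^ 5 + 66 * X 14 ^ 6) * h10
        + ((-170899080) + 33543972 * X 14 - 4506876 * X 14 ^ 2 + 407880 * X 14 ^ 3 - 23760 * X 14 ^ 4 + 804 * X 14 ^ 5 - 12 * X 14 ^ 6) * h11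
        + (13339535 - 2637558 * X 14 + 357423 * X 14 ^ 2 - 32670 * X 14 ^ 3 + 1925 * X 14 ^ 4 - 66 * X 14 ^ 5 + 1 * X 14 ^ 6) * h12
  · have hFplus' : (1935360 : MvPolynomial (Fin 15) ℚ) * quarticWeierstrassF (![X 1 * X 12 + X 2 * X 14, X 4 * X 12, X 6 * X 12, X 7 * X 12, X 8 * X 12, X 9 * X 12, X 10 * X 12, X 11 * X 12] : Fin 8 → MvPolynomial (Fin 15) ℚ) =
        40320 * (-(((X 9 * X 12) ^ 2 + 4 * (-((X 8 * X 12) * (X 10 * X 12)) - (X 6 * X 12) * (X 11 * X 12))) ^ 2 - 24 * ((X 9 * X 12) * (-((X 7 * X 12) * (X 8 * X 12) * (X 11 * X 12)) - (X 4 * X 12) * (X 10 * X 12) * (X 11 * X 12)) + 2 * ((X 6 * X 12) * (X 8 * X 12) * (X 10 * X 12) * (X 11 * X 12) + (X 1 * X 12 + X 2 * X 14) * (X 10 * X 12) ^ 2 * (X 11 * X 12) + (X 4 * X 12) * (X 7 * X 12) * (X 11 * X 12) ^ 2)))) := by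
      rw [show (1935360 : MvPolynomial (Fin 15) ℚ) = 40320 * 48 from by norm_num, mul_assoc, Fmul]; simp only [vec8_0, vec8_1, vec8_2, vec8_3, vec8_4, vec8_5, vec8_6, vec8_7]
    refine qsmul_cancel (q := (1935360 : ℚ)) (by norm_num) ?_
    rw [sum5]
    simp only [MvPolynomial.smul_eq_C_mul, map_ofNat]
    rw [hFplus']
    simp only [idx9_0, idx9_1, idx9_2, idx9_3, idx9_4, v5_0, v5_1, v5_2, v5_3, v5_4]
    norm_num
    simp only [mk9_4, mk9_5, mk9_6, mk9_7, mk9_8]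
    linear_combination (norm := ring1)
      (22449 - 4536 * X 14 + 546 * X 14 ^ 2 - 36 * X 14 ^ 3 + 1 * X 14 ^ 4) * hf0
        + ((-147392) + 32200 * X 14 - 4088 * X 14 ^ 2 + 280 * X 14 ^ 3 - 8 * X 14 ^ 4) * hf1
        + (428092 - 100240 * X 14 + 13384 * X 14 ^ 2 - 952 * X 14 ^ 3 + 28 * X 14 ^ 4) * hf2
        + ((-720384) + 178920 * X 14 - 25032 * X 14 ^ 2 + 1848 * X 14 ^ 3 - 56 * X 14 ^ 4) * hf3
        + (769510 - 200480 * X 14 + 29260 * X 14 ^ 2 - 2240 * X 14 ^ 3 + 70 * X 14 ^ 4) * hf4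
        + ((-534464) + 144536 * X 14 - 21896 * X 14 ^ 2 + 1736 * X 14 ^ 3 - 56 * X 14 ^ 4) * hf5
        + (235452 - 65520 * X 14 + 10248 * X 14 ^ 2 - 840 * X 14 ^ 3 + 28 * X 14 ^ 4) * hf6
        + ((-60032) + 17080 * X 14 - 2744 * X 14 ^ 2 + 232 * X 14 ^ 3 - 8 * X 14 ^ 4) * hf7
        + (6769 - 1960 * X 14 + 322 * X 14 ^ 2 - 28 * X 14 ^ 3 + 1 * X 14 ^ 4) * hf8
end
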